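/- Let R = k[x,y,z]/(xy − z², x² − yz) for a field k and let p = (x̄, z̄), which is a prime ideal of R. Then there is no finitely generated R-module M with a submodule N admitting an RPE filtration N ⊂^{p} N₁ ⊂^{p} M; equivalently, p² is not the generalized prime ideal factorization of any submodule. -/

import Mathlib

variable {R : Type*} [CommRing R] {M : Type*} [AddCommGroup M] [Module R M]

/-- The colon submodule `(N :_M I) = {x ∈ M | I • x ⊆ N}`. -/
def colonSubmodule (N : Submodule R M) (I : Ideal R) : Submodule R M where
  carrier := {x | ∀ a ∈ I, a • x ∈ N}
  add_mem' := fun hx hy a ha => by simpa [smul_add] using N.add_mem (hx a ha) (hy a ha)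
  zero_mem' := fun a _ => by simp
  smul_mem' := fun c x hx a ha => by
    rw [smul_comm]
    exact N.smul_mem c (hx a ha)

/-- `K` is a `p`-prime extension of `N`, i.e. `N` is a `p`-prime submodule of `K`. -/
def IsPrimeExt (p : Ideal R) (N K : Submodule R M) : Prop :=
  N < K ∧ N.colon K = p ∧ ∀ a : R, ∀ x ∈ K, a • x ∈ N → x ∈ N ∨ a ∈ p

/-- The associated primes of `T / N` for submodules `N ≤ T ≤ M`. -/
def assOf (R : Type*) {M : Type*} [CommRing R] [AddCommGroup M] [Module R M]
    (N T : Submodule R M) : Set (Ideal R) :=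
  associatedPrimes R ↥(T.map N.mkQ)

/-- `K` is a maximal `p`-prime extension of `N` inside `T`. -/
def IsMaximalPrimeExtIn (T : Submodule R M) (p : Ideal R) (N K : Submodule R M) : Prop :=
  K ≤ T ∧ IsPrimeExt p N K ∧ ∀ L ≤ T, IsPrimeExt p N L → ¬ K < L

/-- `K` is a regular `p`-prime extension of `N` inside `T`: a maximal `p`-prime
extension where `p` is a maximal element of `Ass (T/N)`. -/
def IsRegularPrimeExtIn (T : Submodule R M) (p : Ideal R) (N K : Submodule R M) : Prop :=
  IsMaximalPrimeExtIn T p N K ∧ Maximal (· ∈ assOf R N T) p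

/-- A regular prime extension (RPE) filtration inside `T` with primes `p i`. -/
def IsRPEFiltrationIn (T : Submodule R M) {n : ℕ}
    (F : Fin (n + 1) → Submodule R M) (p : Fin n → Ideal R) : Prop :=
  ∀ i : Fin n, IsRegularPrimeExtIn T (p i) (F i.castSucc) (F i.succ)

/-- The generalized prime ideal factorization of `N` in `T` is given by the multiset `s`:
there is an RPE filtration of `T` over `N` whose multiset of primes is `s`. -/
def HasGPIF (N T : Submodule R M) (s : Multiset (Ideal R)) : Prop :=
  ∃ (n : ℕ) (F : Fin (n + 1) → Submodule R M) (p : Fin n → Ideal R),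
    F 0 = N ∧ F (Fin.last n) = T ∧ IsRPEFiltrationIn T F p ∧ (List.ofFn p : Multiset (Ideal R)) = s

open MvPolynomial in
lemma ker_phi_eq {k : Type*} [Field k] :
    RingHom.ker (MvPolynomial.aeval (R := k) ![0, Polynomial.X, 0] :
        MvPolynomial (Fin 3) k →ₐ[k] Polynomial k)
      = Ideal.span {X 0, X 2} := by
  set φ := (MvPolynomial.aeval (R := k) ![0, Polynomial.X, 0] :
        MvPolynomial (Fin 3) k →ₐ[k] Polynomial k)
  set ι := (Polynomial.aeval (X 1 : MvPolynomial (Fin 3) k) :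
        Polynomial k →ₐ[k] MvPolynomial (Fin 3) k)
  set P : Ideal (MvPolynomial (Fin 3) k) := Ideal.span {X 0, X 2}
  have key : ∀ q : MvPolynomial (Fin 3) k, q - ι (φ q) ∈ P := by
    intro q
    induction q using MvPolynomial.induction_on with
    | C a => simp [φ, ι, aeval_C, Polynomial.aeval_algebraMap_eq_zero_iff]
    | add q r hq hr =>
        have : q + r - ι (φ (q + r)) = (q - ι (φ q)) + (r - ι (φ r)) := by
          rw [map_add, map_add]; ring
        rw [this]; exact P.add_mem hq hr
    | mul_X q i hq =>
        have hXi : X i - ι (φ (X i)) ∈ P := by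
          fin_cases i <;>
            simp [φ, ι, P] <;>
            exact Ideal.subset_span (by simp)
        have : q * X i - ι (φ (q * X i))
            = (q - ι (φ q)) * X i + ι (φ q) * (X i - ι (φ (X i))) := by
          rw [map_mul, map_mul]; ring
        rw [this]
        exact P.add_mem (Ideal.mul_mem_right _ _ hq) (Ideal.mul_mem_left _ _ hXi)
  apply le_antisymm
  · intro q hq
    rw [RingHom.mem_ker] at hq
    have := key q
    rwa [hq, map_zero, sub_zero] at this
  · rw [Ideal.span_le]
    rintro q (rfl | rfl) <;> simp [φ, RingHom.mem_ker, SetLike.mem_coe]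

open MvPolynomial in
lemma spanX02_isPrime {k : Type*} [Field k] :
    (Ideal.span {X 0, X 2} : Ideal (MvPolynomial (Fin 3) k)).IsPrime := by
  rw [← ker_phi_eq]
  exact RingHom.ker_isPrime _

open MvPolynomial in
lemma X1_not_mem {k : Type*} [Field k] :
    (X 1 : MvPolynomial (Fin 3) k) ∉ (Ideal.span {X 0, X 2}) := by
  rw [← ker_phi_eq]
  simp [RingHom.mem_ker, Polynomial.X_ne_zero]

open MvPolynomial in
/-- In `R = k[x,y,z]/(xy − z², x² − yz)` (presented as a surjective image of `k[x,y,z]`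
with the indicated kernel) with `p = (x̄, z̄)`, the ideal `p` is prime and there is no
finitely generated `R`-module `M` with a submodule `N` admitting an RPE filtration
`N ⊂^p N₁ ⊂^p M`; i.e. `p²` is not a generalized prime ideal factorization. -/
theorem no_gpif_p_sq.{u} (k : Type*) [Field k]
    (R : Type*) [CommRing R] [IsNoetherianRing R]
    (f : MvPolynomial (Fin 3) k →+* R) (hf : Function.Surjective f)
    (hker : RingHom.ker f = Ideal.span {X 0 * X 1 - X 2 ^ 2, X 0 ^ 2 - X 1 * X 2})
    (p : Ideal R) (hp : p = (Ideal.span {X 0, X 2}).map f) :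
    p.IsPrime ∧
      ∀ (M : Type u) [AddCommGroup M] [Module R M] [Module.Finite R M]
        (N N₁ : Submodule R M),
          ¬ (IsRegularPrimeExtIn ⊤ p N N₁ ∧ IsRegularPrimeExtIn ⊤ p N₁ ⊤) := by
  have hPprime : (Ideal.span {X 0, X 2} : Ideal (MvPolynomial (Fin 3) k)).IsPrime :=
    spanX02_isPrime
  -- the kernel is contained in the prime (X 0, X 2)
  have hkle : RingHom.ker f ≤ Ideal.span {X 0, X 2} := by
    rw [hker, Ideal.span_le]
    rintro q (rfl | rfl)
    · exact Ideal.mem_span_pair.mpr ⟨X 1, -X 2, by ring⟩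
    · exact Ideal.mem_span_pair.mpr ⟨X 0, -X 1, by ring⟩
  have hpprime : p.IsPrime := by
    rw [hp]; exact Ideal.map_isPrime_of_surjective hf hkle
  refine ⟨hpprime, ?_⟩
  intro M _ _ _ N N₁ ⟨hreg1, hreg2⟩
  obtain ⟨⟨hN₁T, ⟨hlt1, hcolon1, hprime1⟩, hmax1⟩, hassmax⟩ := hreg1
  obtain ⟨⟨_, ⟨hlt2, hcolon2, _⟩, _⟩, _⟩ := hreg2
  -- generators of p
  have hfX0 : f (X 0) ∈ p := hp ▸ Ideal.mem_map_of_mem f (Ideal.subset_span (by simp))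
  have hfX2 : f (X 2) ∈ p := hp ▸ Ideal.mem_map_of_mem f (Ideal.subset_span (by simp))
  have hfX1 : f (X 1) ∉ p := by
    intro h
    rw [hp] at h
    have h' : (X 1 : MvPolynomial (Fin 3) k)
        ∈ Ideal.comap f (Ideal.map f (Ideal.span {X 0, X 2})) := Ideal.mem_comap.mpr h
    rw [Ideal.comap_map_of_surjective f hf, ← RingHom.ker_eq_comap_bot, sup_of_le_left hkle] at h'
    exact X1_not_mem h'
  -- basic consequences of the colon conditions
  have hpN₁ : ∀ a ∈ p, ∀ x ∈ N₁, a • x ∈ N := fun a ha x hx =>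
    Submodule.mem_colon.mp (hcolon1 ▸ ha) x hx
  have hpM : ∀ a ∈ p, ∀ x : M, a • x ∈ N₁ := fun a ha x =>
    Submodule.mem_colon.mp (hcolon2 ▸ ha) x Submodule.mem_top
  -- translate maximality in Ass to the quotient module
  have hass : assOf R N (⊤ : Submodule R M) = associatedPrimes R (M ⧸ N) := by
    unfold assOf
    rw [Submodule.map_top, Submodule.range_mkQ]
    exact LinearEquiv.AssociatedPrimes.eq Submodule.topEquiv
  rw [hass] at hassmax
  obtain ⟨hass1, hmaxp⟩ := hassmax
  obtain ⟨_, x₀, hx₀⟩ := isAssociatedPrime_iff.mp hass1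
  obtain ⟨y, rfl⟩ := Submodule.mkQ_surjective N x₀
  have hx₀mem : ∀ r : R, r ∈ p ↔ r • y ∈ N := by
    intro r
    rw [hx₀, Submodule.mem_colon_singleton, Submodule.mem_bot, ← map_smul,
      Submodule.mkQ_apply, Submodule.Quotient.mk_eq_zero]
  -- the colon submodule L = (N :_M p)
  set L : Submodule R M := colonSubmodule N p with hL
  have hmemL : ∀ x : M, x ∈ L ↔ ∀ a ∈ p, a • x ∈ N := fun _ => Iff.rfl
  have hNL : N ≤ L := fun n hn => fun a _ => N.smul_mem a hn
  have hyL : y ∈ L := fun a ha => (hx₀mem a).mp ha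
  have hyN : y ∉ N := by
    intro h
    have : (1 : R) ∈ p := (hx₀mem 1).mpr (by simpa using h)
    exact hpprime.ne_top (Ideal.eq_top_of_isUnit_mem _ this isUnit_one)
  -- L is a p-prime extension of N
  have hext : IsPrimeExt p N L := by
    refine ⟨lt_of_le_of_ne hNL (fun h => hyN (h ▸ hyL)), ?_, ?_⟩
    · apply le_antisymm
      · intro a ha
        exact (hx₀mem a).mpr (Submodule.mem_colon.mp ha y hyL)
      · intro a ha
        exact Submodule.mem_colon.mpr fun x hx => hx a ha
    · intro a x hx hax
      by_contra hcon
      push_neg at hcon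
      obtain ⟨hxN, haP⟩ := hcon
      have hxq : Submodule.mkQ N x ≠ 0 := by
        rwa [Ne, Submodule.mkQ_apply, Submodule.Quotient.mk_eq_zero]
      obtain ⟨q, hq, hle⟩ :=
        exists_le_isAssociatedPrime_of_isNoetherianRing R (Submodule.mkQ N x) hxq
      have hpleann : p ≤ (⊥ : Submodule R (M ⧸ N)).colon {Submodule.mkQ N x} := by
        intro b hb
        rw [Submodule.mem_colon_singleton, Submodule.mem_bot, ← map_smul,
          Submodule.mkQ_apply, Submodule.Quotient.mk_eq_zero]
        exact hx b hb
      have haq : a ∈ q := hle (by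
        rw [Submodule.mem_colon_singleton, Submodule.mem_bot, ← map_smul,
          Submodule.mkQ_apply, Submodule.Quotient.mk_eq_zero]
        exact hax)
      exact haP (hmaxp hq (hpleann.trans hle) haq)
  -- maximality forces N₁ = L
  have hN₁L : N₁ ≤ L := fun x hx a ha => hpN₁ a ha x hx
  have hLN₁ : N₁ = L := by
    by_contra h
    exact hmax1 L le_top hext (lt_of_le_of_ne hN₁L h)
  -- the key computation: f(X 1) ∈ (N₁ :_R M) = p
  have hkey : f (X 1) ∈ p := by
    rw [← hcolon2]
    refine Submodule.mem_colon.mpr fun x _ => ?_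
    rw [hLN₁]
    intro a ha
    rw [hp] at ha
    rw [Ideal.map_span, Set.image_pair, Ideal.mem_span_pair] at ha
    obtain ⟨u, v, huv⟩ := ha
    have h1 : f (X 0) * f (X 1) = f (X 2) * f (X 2) := by
      have h : (X 0 * X 1 - X 2 ^ 2 : MvPolynomial (Fin 3) k) ∈ RingHom.ker f :=
        hker ▸ Ideal.subset_span (by simp)
      rw [RingHom.mem_ker, map_sub, sub_eq_zero] at h
      calc f (X 0) * f (X 1) = f (X 0 * X 1) := (map_mul f _ _).symm
        _ = f (X 2 ^ 2) := h
        _ = f (X 2) * f (X 2) := by rw [pow_two, map_mul]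
    have h2 : f (X 2) * f (X 1) = f (X 0) * f (X 0) := by
      have h : (X 0 ^ 2 - X 1 * X 2 : MvPolynomial (Fin 3) k) ∈ RingHom.ker f :=
        hker ▸ Ideal.subset_span (by simp)
      rw [RingHom.mem_ker, map_sub, sub_eq_zero] at h
      calc f (X 2) * f (X 1) = f (X 1 * X 2) := by rw [map_mul]; ring
        _ = f (X 0 ^ 2) := h.symm
        _ = f (X 0) * f (X 0) := by rw [pow_two, map_mul]
    have heq : a * f (X 1) = u * (f (X 2) * f (X 2)) + v * (f (X 0) * f (X 0)) := by
      rw [← h1, ← h2, ← huv]; ring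
    have hmem : (a * f (X 1)) • x ∈ N := by
      rw [heq, add_smul, mul_smul, mul_smul, mul_smul, mul_smul]
      exact N.add_mem
        (N.smul_mem u (hpN₁ _ hfX2 _ (hpM _ hfX2 x)))
        (N.smul_mem v (hpN₁ _ hfX0 _ (hpM _ hfX0 x)))
    rw [smul_smul]
    exact hmem
  exact hfX1 hkey
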